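/- Suppose L₀ is a sequential contraction of L, and fix l : ℕ with l ≥ 1. If L is l-unimodular, i.e. the trace of (ad x)^l vanishes for every x : L, then L₀ is l-unimodular: for every x : L₀, LinearMap.trace ℝ L₀ ((LieAlgebra.ad ℝ L₀ x) ^ l) = 0. (The case l = 1 is the statement that a sequential contraction of a unimodular Lie algebra is unimodular.) -/

import Mathlib

open Filter Module

/-- `L₀` is a sequential contraction of the real Lie algebra `L`: there is a sequence of
real-linear equivalences `T p : L ≃ₗ[ℝ] L₀` such that the transported brackets converge to the
bracket of `L₀`. -/
def IsSequentialContraction (L L₀ : Type*) [LieRing L] [LieAlgebra ℝ L]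
    [LieRing L₀] [LieAlgebra ℝ L₀] [TopologicalSpace L₀] : Prop :=
  ∃ T : ℕ → (L ≃ₗ[ℝ] L₀), ∀ x y : L₀,
    Tendsto (fun p => T p ⁅(T p).symm x, (T p).symm y⁆) atTop (nhds ⁅x, y⁆)

lemma conj_pow' {R M N : Type*} [CommRing R] [AddCommGroup M] [Module R M]
    [AddCommGroup N] [Module R N] (e : M ≃ₗ[R] N) (f : M →ₗ[R] M) (n : ℕ) :
    e.conj (f ^ n) = (e.conj f) ^ n := by
  induction n with
  | zero => ext y; simp [LinearEquiv.conj_apply, Module.End.one_apply]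
  | succ k ih =>
      rw [pow_succ, pow_succ, ← ih]
      have : f ^ k * f = (f ^ k).comp f := rfl
      rw [this, LinearEquiv.conj_comp]
      rfl

/-- A sequential contraction of an `l`-unimodular Lie algebra is `l`-unimodular. -/
theorem unimodular_of_contraction {L L₀ : Type*} [LieRing L] [LieAlgebra ℝ L] [LieRing L₀] [LieAlgebra ℝ L₀]
    [Module.Finite ℝ L] [Module.Finite ℝ L₀]
    [TopologicalSpace L₀] [IsTopologicalAddGroup L₀] [ContinuousSMul ℝ L₀] [T2Space L₀]
    (h : IsSequentialContraction L L₀)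
    (l : ℕ) (hl : 1 ≤ l)
    (hL : ∀ x : L, LinearMap.trace ℝ L ((LieAlgebra.ad ℝ L x) ^ l) = 0) :
    ∀ x : L₀, LinearMap.trace ℝ L₀ ((LieAlgebra.ad ℝ L₀ x) ^ l) = 0 := by
  obtain ⟨T, hT⟩ := h
  intro x
  have : FiniteDimensional ℝ L₀ := ‹Module.Finite ℝ L₀›
  let b := Module.finBasis ℝ L₀
  set f : ℕ → (L₀ →ₗ[ℝ] L₀) :=
    fun p => (T p).conj (LieAlgebra.ad ℝ L ((T p).symm x)) with hf
  have htr0 : ∀ p, LinearMap.trace ℝ L₀ ((f p) ^ l) = 0 := by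
    intro p
    rw [hf]
    simp only
    rw [← conj_pow', LinearMap.trace_conj']
    exact hL _
  have hpt : ∀ y : L₀, Tendsto (fun p => f p y) atTop (nhds (LieAlgebra.ad ℝ L₀ x y)) := by
    intro y
    simpa [hf, LinearEquiv.conj_apply, LieAlgebra.ad_apply] using hT x y
  have hM : Tendsto (fun p => LinearMap.toMatrix b b (f p)) atTop
      (nhds (LinearMap.toMatrix b b (LieAlgebra.ad ℝ L₀ x))) := by
    refine tendsto_pi_nhds.mpr ?_
    intro i
    rw [tendsto_pi_nhds]
    intro j
    simp only [LinearMap.toMatrix_apply]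
    have hc : Continuous (b.coord i) := (b.coord i).continuous_of_finiteDimensional
    exact (hc.tendsto _).comp (hpt (b j))
  have hcont : Continuous fun A : Matrix (Fin (finrank ℝ L₀)) (Fin (finrank ℝ L₀)) ℝ =>
      (A ^ l).trace := by
    exact (continuous_pow l).matrix_trace
  have hfin : Tendsto (fun p => ((LinearMap.toMatrix b b (f p)) ^ l).trace) atTop
      (nhds (((LinearMap.toMatrix b b (LieAlgebra.ad ℝ L₀ x)) ^ l).trace)) :=
    (hcont.tendsto _).comp hM
  have key : ∀ g : L₀ →ₗ[ℝ] L₀,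
      ((LinearMap.toMatrix b b g) ^ l).trace = LinearMap.trace ℝ L₀ (g ^ l) := by
    intro g
    rw [LinearMap.trace_eq_matrix_trace ℝ b (g ^ l)]
    congr 1
    exact (map_pow (LinearMap.toMatrixAlgEquiv b) g l).symm
  simp only [key] at hfin
  simp only [htr0] at hfin
  exact (tendsto_nhds_unique tendsto_const_nhds hfin).symm
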